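/- Let N ≥ 2 be an integer, ε > 0, L > 0, t ≥ 0, Γ ≥ 0, and let λ_1 < λ_2 < ⋯ < λ_N be real numbers with −L < λ_j < 0 for all j, and γ_1, …, γ_N be real numbers with |γ_j| ≤ Γ for all j. Let B be the N×N Hermitian matrix with entries B_{jk} = −iε/(λ_j − λ_k) for j ≠ k and B_{jj} = −2λ_j t − γ_j, let Δ be the diagonal matrix with Δ_{jj} = 1/(−2λ_j), and set C := B + iεΔ. Then every eigenvalue σ of C satisfies |Re σ| ≤ (2tL + Γ) + εN / min_{s≠j} |λ_s − λ_j|. -/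
import Mathlib


open scoped BigOperators

theorem stmt1 (N : ℕ) (hN : 2 ≤ N) (ε L t Γ : ℝ) (hε : 0 < ε) (hL : 0 < L)
    (ht : 0 ≤ t) (hΓ : 0 ≤ Γ)
    (lam : Fin N → ℝ) (hmono : StrictMono lam)
    (hrange : ∀ j, lam j ∈ Set.Ioo (-L) 0)
    (γ : Fin N → ℝ) (hγ : ∀ j, |γ j| ≤ Γ)
    (B : Matrix (Fin N) (Fin N) ℂ)
    (hB : ∀ j k, B j k = if j = k then (((-2) * lam j * t - γ j : ℝ) : ℂ)
        else -Complex.I * (ε : ℂ) / ((lam j : ℂ) - (lam k : ℂ)))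
    (C : Matrix (Fin N) (Fin N) ℂ)
    (hC : C = B + Matrix.diagonal (fun j => Complex.I * (ε : ℂ) * (1 / (-2 * (lam j : ℂ)))))
    (d : ℝ) (hd : IsLeast {r : ℝ | ∃ s j : Fin N, s ≠ j ∧ r = |lam s - lam j|} d)
    (σ : ℂ) (hσ : ∃ w : Fin N → ℂ, w ≠ 0 ∧ C.mulVec w = σ • w) :
    |σ.re| ≤ (2 * t * L + Γ) + ε * N / d := by
  -- d is positive
  obtain ⟨⟨s0, j0, hsj0, hd0⟩, hdlb⟩ := hd
  have hdpos : 0 < d := by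
    rw [hd0]
    exact abs_pos.mpr (sub_ne_zero.mpr (fun h => hsj0 (hmono.injective h)))
  -- σ is an eigenvalue of toLin' C
  obtain ⟨w, hw0, hww⟩ := hσ
  have heig : Module.End.HasEigenvalue (Matrix.toLin' C) σ := by
    apply Module.End.hasEigenvalue_of_hasEigenvector (x := w)
    refine ⟨?_, hw0⟩
    rw [Module.End.mem_eigenspace_iff, Matrix.toLin'_apply, hww]
  obtain ⟨k, hk⟩ := eigenvalue_mem_ball heig
  rw [Metric.mem_closedBall, dist_eq_norm] at hk
  -- diagonal entry of C
  have hCkk : C k k = (((-2) * lam k * t - γ k : ℝ) : ℂ)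
      + Complex.I * (ε : ℂ) * (1 / (-2 * (lam k : ℂ))) := by
    simp [hC, hB, Matrix.diagonal]
  have hre : (C k k).re = (-2) * lam k * t - γ k := by
    have : (-2 : ℂ) * (lam k : ℂ) = ((-2 * lam k : ℝ) : ℂ) := by push_cast; ring
    rw [hCkk, this, one_div, ← Complex.ofReal_inv]
    simp [Complex.mul_re]
  -- bound |Re C k k|
  have hdiag : |(C k k).re| ≤ 2 * t * L + Γ := by
    rw [hre]
    have h1 := (hrange k).1
    have h2 := (hrange k).2
    have : |(-2) * lam k * t| ≤ 2 * t * L := by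
      rw [abs_mul, abs_mul]
      rw [abs_of_nonneg ht]
      have : |lam k| ≤ L := by rw [abs_le]; constructor <;> nlinarith
      calc |(-2 : ℝ)| * |lam k| * t = 2 * |lam k| * t := by norm_num
        _ ≤ 2 * L * t := by nlinarith [abs_nonneg (lam k)]
        _ = 2 * t * L := by ring
    calc |(-2) * lam k * t - γ k| ≤ |(-2) * lam k * t| + |γ k| := abs_sub _ _
      _ ≤ 2 * t * L + Γ := add_le_add this (hγ k)
  -- bound each off-diagonal norm
  have hoff : ∀ j : Fin N, j ≠ k → ‖C k j‖ ≤ ε / d := by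
    intro j hjk
    have hne : k ≠ j := fun h => hjk h.symm
    have hCkj : C k j = -Complex.I * (ε : ℂ) / ((lam k : ℂ) - (lam j : ℂ)) := by
      simp [hC, hB, Matrix.diagonal, hne, Ne.symm hne]
    have hcast : (lam k : ℂ) - (lam j : ℂ) = ((lam k - lam j : ℝ) : ℂ) := by push_cast; ring
    have hnorm : ‖C k j‖ = ε / |lam k - lam j| := by
      rw [hCkj, hcast, norm_div, norm_mul, norm_neg, Complex.norm_I, one_mul,
        Complex.norm_real, Complex.norm_real, Real.norm_eq_abs, Real.norm_eq_abs,
        abs_of_pos hε]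
    rw [hnorm]
    have hle : d ≤ |lam k - lam j| := hdlb ⟨k, j, hne, rfl⟩
    exact div_le_div_of_nonneg_left hε.le hdpos hle
  -- sum of off-diagonal norms
  have hsum : (∑ j ∈ Finset.univ.erase k, ‖C k j‖) ≤ ε * N / d := by
    calc (∑ j ∈ Finset.univ.erase k, ‖C k j‖)
        ≤ ∑ j ∈ Finset.univ.erase k, (ε / d) := by
          apply Finset.sum_le_sum
          intro j hj
          exact hoff j (Finset.ne_of_mem_erase hj)
      _ = (Finset.univ.erase k).card * (ε / d) := by rw [Finset.sum_const, nsmul_eq_mul]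
      _ ≤ N * (ε / d) := by
          apply mul_le_mul_of_nonneg_right _ (by positivity)
          have : (Finset.univ.erase k).card ≤ (Finset.univ : Finset (Fin N)).card :=
            Finset.card_le_card (Finset.erase_subset _ _)
          exact_mod_cast Nat.cast_le.mpr (this.trans (by simp))
      _ = ε * N / d := by ring
  -- conclude
  have h1 : |σ.re - (C k k).re| ≤ ‖σ - C k k‖ := by
    rw [← Complex.sub_re]
    exact Complex.abs_re_le_norm _
  calc |σ.re| ≤ |(C k k).re| + |σ.re - (C k k).re| := by
        have := abs_sub_abs_le_abs_sub σ.re (C k k).re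
        nlinarith [abs_nonneg (σ.re - (C k k).re), abs_sub_abs_le_abs_sub σ.re (C k k).re,
          abs_abs (σ.re)]
    _ ≤ (2 * t * L + Γ) + ε * N / d :=
        add_le_add hdiag (h1.trans (hk.trans hsum))
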